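/- Locality of regularity for generalized functions: let λ be a generalized function on [a,b] (an element of D^k([a,b],V)). Suppose that for every t ∈ [a,b] there exists ε > 0 such that the restriction of λ to [t−ε, t+ε] ∩ [a,b] is represented by a C^m function (m ≥ 0). Then λ is represented by a C^m function on [a,b]. -/

import Mathlib

open MeasureTheory

/-- `α` belongs to `C^k₀([a,b],E)`: it is `C^k` and its derivatives of order `≤ k`
vanish at `a` and `b`. -/
def MemCk0 (k : ℕ) (a b : ℝ) {E : Type*} [NormedAddCommGroup E] [NormedSpace ℝ E]
    (α : ℝ → E) : Prop :=
  ContDiff ℝ k α ∧ ∀ j ≤ k, iteratedDeriv j α a = 0 ∧ iteratedDeriv j α b = 0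

/-- The `C^k` norm of `α` on `[a,b]` is bounded by `K`. -/
def CkNormLe (k : ℕ) (a b : ℝ) {E : Type*} [NormedAddCommGroup E] [NormedSpace ℝ E]
    (α : ℝ → E) (K : ℝ) : Prop :=
  ∀ j ≤ k, ∀ t ∈ Set.Icc a b, ‖iteratedDeriv j α t‖ ≤ K

/-- `f` represents an element of `D^k([a,b],V)`, the continuous dual of
`C^k₀([a,b],V*)`. -/
structure IsDk (k : ℕ) (a b : ℝ) {V : Type*} [NormedAddCommGroup V] [NormedSpace ℝ V]
    (f : (ℝ → (V →L[ℝ] ℝ)) → ℝ) : Prop where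
  map_add : ∀ α β, MemCk0 k a b α → MemCk0 k a b β → f (α + β) = f α + f β
  map_smul : ∀ (c : ℝ) (α), MemCk0 k a b α → f (c • α) = c * f α
  bound : ∃ C : ℝ, ∀ α K, MemCk0 k a b α → CkNormLe k a b α K → |f α| ≤ C * K


open MeasureTheory Topology Filter Set Manifold

section Aux

variable {E : Type*} [NormedAddCommGroup E] [NormedSpace ℝ E]

/-- global product continuity from continuity on an open set containing the support -/
lemma cont_smul_of_tsupport {φ : ℝ → ℝ} {h : ℝ → E} {W : Set ℝ} (hW : IsOpen W)
    (hφ : Continuous φ) (hsupp : tsupport φ ⊆ W) (hh : ContinuousOn h W) :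
    Continuous fun x => φ x • h x := by
  rw [continuous_iff_continuousAt]
  intro x
  by_cases hx : x ∈ W
  · exact hφ.continuousAt.smul (hh.continuousAt (hW.mem_nhds hx))
  · have hx' : x ∉ tsupport φ := fun hc => hx (hsupp hc)
    have hev : (fun x => φ x • h x) =ᶠ[𝓝 x] (fun _ => (0 : E)) := by
      filter_upwards [notMem_tsupport_iff_eventuallyEq.mp hx'] with y hy
      simp [hy]
    exact continuousAt_const.congr hev.symm

lemma iteratedDeriv_eq_zero_of_eventuallyEq {f : ℝ → E} {x : ℝ}
    (h : f =ᶠ[𝓝 x] (fun _ => (0 : E))) (j : ℕ) : iteratedDeriv j f x = 0 := by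
  rw [h.iteratedDeriv_eq j, iteratedDeriv, iteratedFDeriv_zero_fun]
  simp

lemma iteratedDeriv_add_apply' {n : ℕ} {f g : ℝ → E} {x : ℝ}
    (hf : ContDiff ℝ n f) (hg : ContDiff ℝ n g) :
    iteratedDeriv n (f + g) x = iteratedDeriv n f x + iteratedDeriv n g x := by
  simp only [← iteratedDerivWithin_univ]
  exact iteratedDerivWithin_add (Set.mem_univ x) uniqueDiffOn_univ
    hf.contDiffAt.contDiffWithinAt hg.contDiffAt.contDiffWithinAt

/-- iterated derivatives of `u • w` vanish where those of `w` vanish -/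
lemma smul_iteratedDeriv_eq_zero :
    ∀ (k : ℕ) (u : ℝ → ℝ) (w : ℝ → E) (x : ℝ), ContDiff ℝ k u → ContDiff ℝ k w →
      (∀ j ≤ k, iteratedDeriv j w x = 0) →
      ∀ j ≤ k, iteratedDeriv j (fun s => u s • w s) x = 0 := by
  intro k
  induction k with
  | zero =>
    intro u w x hu hw h j hj
    interval_cases j
    simp only [iteratedDeriv_zero]
    have := h 0 le_rfl
    rw [iteratedDeriv_zero] at this
    simp [this]
  | succ n ih =>
    intro u w x hu hw h j hj
    match j with
    | 0 =>
      simp only [iteratedDeriv_zero]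
      have := h 0 (by omega)
      rw [iteratedDeriv_zero] at this
      simp [this]
    | (j + 1) =>
      have hu' : ContDiff ℝ (↑(n + 1)) u := hu
      have hw' : ContDiff ℝ (↑(n + 1)) w := hw
      have hun : ContDiff ℝ ((n : WithTop ℕ∞) + 1) u := by exact_mod_cast hu'
      have hwn : ContDiff ℝ ((n : WithTop ℕ∞) + 1) w := by exact_mod_cast hw'
      have hud := contDiff_succ_iff_deriv.mp hun
      have hwd := contDiff_succ_iff_deriv.mp hwn
      have hderiv : deriv (fun s => u s • w s) =
          (fun s => u s • deriv w s) + (fun s => deriv u s • w s) := by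
        funext y
        exact deriv_smul (hud.1 y) (hwd.1 y)
      rw [iteratedDeriv_succ', hderiv]
      have hj' : j ≤ n := by omega
      have h1 : ContDiff ℝ (n : ℕ) (fun s => u s • deriv w s) :=
        (hun.of_le (by exact_mod_cast Nat.le_succ n)).smul hwd.2.2
      have h2 : ContDiff ℝ (n : ℕ) (fun s => deriv u s • w s) :=
        hud.2.2.smul (hwn.of_le (by exact_mod_cast Nat.le_succ n))
      rw [iteratedDeriv_add_apply' (h1.of_le (by exact_mod_cast hj')) (h2.of_le (by exact_mod_cast hj'))]
      have A : iteratedDeriv j (fun s => u s • deriv w s) x = 0 := by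
        refine ih u (deriv w) x (hun.of_le (by exact_mod_cast Nat.le_succ n)) hwd.2.2
          (fun i hi => ?_) j hj'
        rw [← iteratedDeriv_succ']
        exact h (i + 1) (by omega)
      have B : iteratedDeriv j (fun s => deriv u s • w s) x = 0 := by
        refine ih (deriv u) w x hud.2.2 (hwn.of_le (by exact_mod_cast Nat.le_succ n))
          (fun i hi => h i (by omega)) j hj'
      rw [A, B, add_zero]

end Aux


section Ck0

variable {k : ℕ} {a b : ℝ} {E : Type*} [NormedAddCommGroup E] [NormedSpace ℝ E]
  {f g : ℝ → E}

lemma MemCk0.add (hf : MemCk0 k a b f) (hg : MemCk0 k a b g) : MemCk0 k a b (f + g) := by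
  refine ⟨hf.1.add hg.1, fun j hj => ?_⟩
  have hf' : ContDiff ℝ j f := hf.1.of_le (by exact_mod_cast hj)
  have hg' : ContDiff ℝ j g := hg.1.of_le (by exact_mod_cast hj)
  constructor
  · rw [iteratedDeriv_add_apply' hf' hg', (hf.2 j hj).1, (hg.2 j hj).1, add_zero]
  · rw [iteratedDeriv_add_apply' hf' hg', (hf.2 j hj).2, (hg.2 j hj).2, add_zero]

lemma MemCk0.neg (hf : MemCk0 k a b f) : MemCk0 k a b (-f) := by
  refine ⟨hf.1.neg, fun j hj => ?_⟩
  have h1 : (-f) = fun x => -(f x) := rfl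
  rw [iteratedDeriv_neg j f a, iteratedDeriv_neg j f b, (hf.2 j hj).1, (hf.2 j hj).2]
  simp

lemma MemCk0.zero : MemCk0 k a b (0 : ℝ → E) := by
  refine ⟨contDiff_const, fun j hj => ?_⟩
  constructor <;>
    exact iteratedDeriv_eq_zero_of_eventuallyEq (Filter.Eventually.of_forall fun _ => rfl) j

lemma MemCk0.sub (hf : MemCk0 k a b f) (hg : MemCk0 k a b g) : MemCk0 k a b (f - g) := by
  rw [sub_eq_add_neg]; exact hf.add hg.neg

lemma MemCk0.sum {ι : Type*} (s : Finset ι) (F : ι → ℝ → E)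
    (hF : ∀ i ∈ s, MemCk0 k a b (F i)) : MemCk0 k a b (∑ i ∈ s, F i) := by
  classical
  induction s using Finset.induction with
  | empty => simpa using MemCk0.zero
  | insert x s' hnot ih =>
    rw [Finset.sum_insert hnot]
    exact (hF x (Finset.mem_insert_self x s')).add
      (ih fun i hi => hF i (Finset.mem_insert_of_mem hi))

end Ck0

section DkLemmas

variable {k : ℕ} {a b : ℝ} {V : Type*} [NormedAddCommGroup V] [NormedSpace ℝ V]
  {lam : (ℝ → (V →L[ℝ] ℝ)) → ℝ}

lemma IsDk.sum_eq (hlam : IsDk k a b lam) {ι : Type*} (s : Finset ι)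
    (F : ι → ℝ → (V →L[ℝ] ℝ)) (hF : ∀ i ∈ s, MemCk0 k a b (F i)) :
    lam (∑ i ∈ s, F i) = ∑ i ∈ s, lam (F i) := by
  classical
  induction s using Finset.induction with
  | empty =>
    simp only [Finset.sum_empty]
    have h0 := hlam.map_smul 0 0 MemCk0.zero
    simpa using h0
  | insert x s' hnot ih =>
    rw [Finset.sum_insert hnot, Finset.sum_insert hnot,
      hlam.map_add _ _ (hF x (Finset.mem_insert_self x s'))
        (MemCk0.sum s' F fun i hi => hF i (Finset.mem_insert_of_mem hi)),
      ih fun i hi => hF i (Finset.mem_insert_of_mem hi)]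

lemma IsDk.eq_zero (hlam : IsDk k a b lam) {β : ℝ → (V →L[ℝ] ℝ)} (hβ : MemCk0 k a b β)
    (h0 : ∀ j ≤ k, ∀ t ∈ Set.Icc a b, iteratedDeriv j β t = 0) : lam β = 0 := by
  obtain ⟨C, hC⟩ := hlam.bound
  have := hC β 0 hβ (fun j hj t ht => by rw [h0 j hj t ht]; simp)
  rw [mul_zero] at this
  exact abs_nonpos_iff.mp this

end DkLemmas

section Agree

variable {V : Type*} [NormedAddCommGroup V] [NormedSpace ℝ V] [FiniteDimensional ℝ V]

lemma rep_agree {a b : ℝ} (hab : a < b) {k : ℕ}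
    {lam : (ℝ → (V →L[ℝ] ℝ)) → ℝ}
    {c₁ d₁ c₂ d₂ : ℝ} {g₁ g₂ : ℝ → V}
    (hg₁ : ContinuousOn g₁ (Set.Icc c₁ d₁ ∩ Set.Icc a b))
    (hg₂ : ContinuousOn g₂ (Set.Icc c₂ d₂ ∩ Set.Icc a b))
    (hrep₁ : ∀ α, MemCk0 k a b α → (∀ s, s ∉ Set.Icc c₁ d₁ → α s = 0) →
      lam α = ∫ s in a..b, α s (g₁ s))
    (hrep₂ : ∀ α, MemCk0 k a b α → (∀ s, s ∉ Set.Icc c₂ d₂ → α s = 0) →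
      lam α = ∫ s in a..b, α s (g₂ s)) :
    ∀ s, s ∈ Set.Ioo c₁ d₁ → s ∈ Set.Ioo c₂ d₂ → s ∈ Set.Icc a b → g₁ s = g₂ s := by
  intro s hs₁ hs₂ hsab
  set W : Set ℝ := (Set.Ioo c₁ d₁ ∩ Set.Ioo c₂ d₂) ∩ Set.Ioo a b with hWdef
  have hWopen : IsOpen W := ((isOpen_Ioo.inter isOpen_Ioo).inter isOpen_Ioo)
  have hWsub₁ : W ⊆ Set.Icc c₁ d₁ ∩ Set.Icc a b :=
    fun x hx => ⟨Set.Ioo_subset_Icc_self hx.1.1, Set.Ioo_subset_Icc_self hx.2⟩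
  have hWsub₂ : W ⊆ Set.Icc c₂ d₂ ∩ Set.Icc a b :=
    fun x hx => ⟨Set.Ioo_subset_Icc_self hx.1.2, Set.Ioo_subset_Icc_self hx.2⟩
  have hcont₁ : ContinuousOn g₁ W := hg₁.mono hWsub₁
  have hcont₂ : ContinuousOn g₂ W := hg₂.mono hWsub₂
  have hcontD : ContinuousOn (fun x => g₁ x - g₂ x) W := hcont₁.sub hcont₂
  -- a.e. vanishing of the difference on W
  have hae : ∀ᵐ x ∂(volume : Measure ℝ), x ∈ W → g₁ x - g₂ x = 0 := by
    apply hWopen.ae_eq_zero_of_integral_contDiff_smul_eq_zero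
      (hcontD.locallyIntegrableOn hWopen.measurableSet)
    intro φ hφ hφc hφsupp
    have hcφD : Continuous fun x => φ x • (g₁ x - g₂ x) :=
      cont_smul_of_tsupport hWopen hφ.continuous hφsupp hcontD
    have hInt : Integrable (fun x => φ x • (g₁ x - g₂ x)) volume :=
      hcφD.integrable_of_hasCompactSupport hφc.smul_right
    apply NormedSpace.eq_zero_of_forall_dual_eq_zero ℝ
    intro ℓ
    rw [← ContinuousLinearMap.integral_comp_comm ℓ hInt]
    -- the test function
    set α : ℝ → (V →L[ℝ] ℝ) := fun t => φ t • ℓ with hαdef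
    have hαsm : ContDiff ℝ k α := (hφ.of_le (by exact_mod_cast le_top)).smul contDiff_const
    have hαzero : ∀ x, x ∉ tsupport φ → α x = 0 := by
      intro x hx
      rw [hαdef]
      simp only [image_eq_zero_of_notMem_tsupport hx, zero_smul]
    have hmem : MemCk0 k a b α := by
      refine ⟨hαsm, fun j hj => ⟨?_, ?_⟩⟩
      · refine iteratedDeriv_eq_zero_of_eventuallyEq ?_ j
        have haW : a ∉ tsupport φ := fun hc => (hφsupp hc).2.1.ne rfl
        filter_upwards [(isClosed_tsupport φ).isOpen_compl.eventually_mem haW] with y hy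
        exact hαzero y hy
      · refine iteratedDeriv_eq_zero_of_eventuallyEq ?_ j
        have hbW : b ∉ tsupport φ := fun hc => (hφsupp hc).2.2.ne rfl
        filter_upwards [(isClosed_tsupport φ).isOpen_compl.eventually_mem hbW] with y hy
        exact hαzero y hy
    have hout₁ : ∀ t, t ∉ Set.Icc c₁ d₁ → α t = 0 := by
      intro t ht
      refine hαzero t fun hc => ht ?_
      exact Set.Ioo_subset_Icc_self (hφsupp hc).1.1
    have hout₂ : ∀ t, t ∉ Set.Icc c₂ d₂ → α t = 0 := by
      intro t ht
      refine hαzero t fun hc => ht ?_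
      exact Set.Ioo_subset_Icc_self (hφsupp hc).1.2
    have he₁ := hrep₁ α hmem hout₁
    have he₂ := hrep₂ α hmem hout₂
    have hsplit : (fun x => ℓ (φ x • (g₁ x - g₂ x)))
        = fun x => φ x • ℓ (g₁ x) - φ x • ℓ (g₂ x) := by
      funext x
      rw [_root_.map_smul, map_sub, smul_sub]
    rw [hsplit]
    have hcg₁ : Continuous fun x => φ x • ℓ (g₁ x) :=
      cont_smul_of_tsupport hWopen hφ.continuous hφsupp (ℓ.continuous.comp_continuousOn hcont₁)
    have hcg₂ : Continuous fun x => φ x • ℓ (g₂ x) :=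
      cont_smul_of_tsupport hWopen hφ.continuous hφsupp (ℓ.continuous.comp_continuousOn hcont₂)
    have hint₁ : Integrable (fun x => φ x • ℓ (g₁ x)) volume :=
      hcg₁.integrable_of_hasCompactSupport hφc.smul_right
    have hint₂ : Integrable (fun x => φ x • ℓ (g₂ x)) volume :=
      hcg₂.integrable_of_hasCompactSupport hφc.smul_right
    rw [MeasureTheory.integral_sub hint₁ hint₂]
    have hIoc : ∀ (h : ℝ → V), ∫ x, φ x • ℓ (h x) ∂(volume : Measure ℝ)
        = ∫ x in a..b, φ x • ℓ (h x) := by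
      intro h
      rw [intervalIntegral.integral_of_le hab.le]
      refine (MeasureTheory.setIntegral_eq_integral_of_forall_compl_eq_zero fun x hx => ?_).symm
      have hxs : x ∉ tsupport φ := by
        intro hc
        exact hx (Set.Ioo_subset_Ioc_self (hφsupp hc).2)
      rw [image_eq_zero_of_notMem_tsupport hxs, zero_smul]
    rw [hIoc g₁, hIoc g₂]
    have hval : ∀ (h : ℝ → V) (x : ℝ), α x (h x) = φ x • ℓ (h x) := by
      intro h x
      rw [hαdef]
      simp [ContinuousLinearMap.smul_apply]
    simp_rw [← hval]
    rw [← he₁, ← he₂, sub_self]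
  -- upgrade to everywhere on W
  have hW0 : ∀ x ∈ W, g₁ x = g₂ x := by
    intro x hx
    by_contra hne
    have hVopen : IsOpen (W ∩ (fun y => g₁ y - g₂ y) ⁻¹' ({0}ᶜ)) :=
      hcontD.isOpen_inter_preimage hWopen isOpen_compl_singleton
    have hmem : x ∈ W ∩ (fun y => g₁ y - g₂ y) ⁻¹' ({0}ᶜ) :=
      ⟨hx, fun hc => hne (sub_eq_zero.mp hc)⟩
    have hpos := hVopen.measure_pos (volume : Measure ℝ) ⟨x, hmem⟩
    have hz : (volume : Measure ℝ) (W ∩ (fun y => g₁ y - g₂ y) ⁻¹' ({0}ᶜ)) = 0 := by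
      rw [MeasureTheory.ae_iff] at hae
      refine MeasureTheory.measure_mono_null (fun y hy => ?_) hae
      intro hc
      exact hy.2 (hc hy.1)
    rw [hz] at hpos
    exact lt_irrefl 0 hpos
  -- pass to the closure point s
  have hsW : s ∈ closure W := by
    have hO : IsOpen (Set.Ioo c₁ d₁ ∩ Set.Ioo c₂ d₂) := isOpen_Ioo.inter isOpen_Ioo
    have hscl : s ∈ closure (Set.Ioo a b) := by
      rw [closure_Ioo hab.ne]; exact hsab
    exact hO.inter_closure ⟨⟨hs₁, hs₂⟩, hscl⟩
  have hne : (nhdsWithin s W).NeBot := mem_closure_iff_nhdsWithin_neBot.mp hsW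
  have ht₁ : Filter.Tendsto g₁ (nhdsWithin s W) (nhds (g₁ s)) :=
    ((hg₁.continuousWithinAt ⟨Set.Ioo_subset_Icc_self hs₁, hsab⟩).mono hWsub₁)
  have ht₂ : Filter.Tendsto g₂ (nhdsWithin s W) (nhds (g₂ s)) :=
    ((hg₂.continuousWithinAt ⟨Set.Ioo_subset_Icc_self hs₂, hsab⟩).mono hWsub₂)
  have ht₁' : Filter.Tendsto g₂ (nhdsWithin s W) (nhds (g₁ s)) := by
    refine ht₁.congr' ?_
    filter_upwards [eventually_mem_nhdsWithin] with y hy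
    exact hW0 y hy
  exact tendsto_nhds_unique ht₁' ht₂

end Agree

/-- locality of regularity: let `λ ∈ D^k([a,b],V)`. If every `t ∈ [a,b]`
has `ε > 0` such that the restriction of `λ` to `[t−ε,t+ε] ∩ [a,b]` is represented by a
`C^m` function (i.e. `λ` agrees with integration against a `C^m` function on all test
functions supported in `[t−ε,t+ε]`), then `λ` is represented by a `C^m` function on
`[a,b]`. -/
theorem generalized_function_regularity_is_local
    (V : Type*) [NormedAddCommGroup V] [NormedSpace ℝ V] [FiniteDimensional ℝ V]
    (a b : ℝ) (hab : a < b) (k m : ℕ)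
    (lam : (ℝ → (V →L[ℝ] ℝ)) → ℝ) (hlam : IsDk k a b lam)
    (hloc : ∀ t ∈ Set.Icc a b, ∃ ε > 0, ∃ g : ℝ → V,
      ContDiffOn ℝ m g (Set.Icc (t - ε) (t + ε) ∩ Set.Icc a b) ∧
      ∀ α, MemCk0 k a b α → (∀ s, s ∉ Set.Icc (t - ε) (t + ε) → α s = 0) →
        lam α = ∫ s in a..b, α s (g s)) :
    ∃ g : ℝ → V, ContDiffOn ℝ m g (Set.Icc a b) ∧
      ∀ α, MemCk0 k a b α → lam α = ∫ s in a..b, α s (g s) := by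

  classical
  choose! ε hε g hg hrep using hloc
  set U : ℝ → Set ℝ := fun t => Set.Ioo (t - ε t) (t + ε t) with hUdef
  have hUsub : ∀ t, U t ⊆ Set.Icc (t - ε t) (t + ε t) := fun t => Set.Ioo_subset_Icc_self
  -- compactness: finite subcover
  have hcov : Set.Icc a b ⊆ ⋃ t ∈ Set.Icc a b, U t := by
    intro x hx
    exact Set.mem_biUnion hx ⟨by linarith [hε x hx], by linarith [hε x hx]⟩
  obtain ⟨T, hTsub, hTfin, hTcov⟩ :=
    isCompact_Icc.elim_finite_subcover_image (fun t _ => isOpen_Ioo) hcov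
  haveI : Fintype ↥T := hTfin.fintype
  -- pairwise agreement of local representatives
  have hagree : ∀ t₁ ∈ Set.Icc a b, ∀ t₂ ∈ Set.Icc a b, ∀ s,
      s ∈ U t₁ → s ∈ U t₂ → s ∈ Set.Icc a b → g t₁ s = g t₂ s := by
    intro t₁ ht₁ t₂ ht₂ s hs₁ hs₂ hsab
    exact rep_agree hab (hg t₁ ht₁).continuousOn (hg t₂ ht₂).continuousOn
      (hrep t₁ ht₁) (hrep t₂ ht₂) s hs₁ hs₂ hsab
  -- the glued function
  set G : ℝ → V := fun s => if h : ∃ t, t ∈ T ∧ s ∈ U t then g h.choose s else 0 with hGdef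
  have hGeq : ∀ t ∈ T, ∀ s, s ∈ U t → s ∈ Set.Icc a b → G s = g t s := by
    intro t ht s hsU hsab
    have hex : ∃ t', t' ∈ T ∧ s ∈ U t' := ⟨t, ht, hsU⟩
    rw [hGdef]
    simp only [dif_pos hex]
    exact hagree hex.choose (hTsub hex.choose_spec.1) t (hTsub ht) s hex.choose_spec.2 hsU hsab
  have hGsmooth : ContDiffOn ℝ m G (Set.Icc a b) := by
    apply contDiffOn_of_locally_contDiffOn
    intro x hx
    rcases Set.mem_iUnion₂.mp (hTcov hx) with ⟨t, ht, hxU⟩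
    refine ⟨U t, isOpen_Ioo, hxU, ?_⟩
    have hsubset : Set.Icc a b ∩ U t ⊆ Set.Icc (t - ε t) (t + ε t) ∩ Set.Icc a b :=
      fun y hy => ⟨hUsub t hy.2, hy.1⟩
    exact ((hg t (hTsub ht)).mono hsubset).congr fun y hy => hGeq t ht y hy.2 hy.1
  -- a slightly larger closed interval still covered
  have hVopen : IsOpen (⋃ t ∈ T, U t) := isOpen_biUnion fun _ _ => isOpen_Ioo
  have haV : a ∈ ⋃ t ∈ T, U t := hTcov (Set.left_mem_Icc.mpr hab.le)
  have hbV : b ∈ ⋃ t ∈ T, U t := hTcov (Set.right_mem_Icc.mpr hab.le)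
  obtain ⟨δ₁, hδ₁pos, hball₁⟩ := Metric.isOpen_iff.mp hVopen a haV
  obtain ⟨δ₂, hδ₂pos, hball₂⟩ := Metric.isOpen_iff.mp hVopen b hbV
  set δ : ℝ := min δ₁ δ₂ / 2 with hδdef
  have hδpos : 0 < δ := by positivity
  have hδ₁ : δ < δ₁ := by
    have := min_le_left δ₁ δ₂
    simp only [hδdef]
    linarith
  have hδ₂ : δ < δ₂ := by
    have := min_le_right δ₁ δ₂
    simp only [hδdef]
    linarith
  have hthick : Set.Icc (a - δ) (b + δ) ⊆ ⋃ t ∈ T, U t := by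
    intro x hx
    rcases lt_or_ge x a with h | h
    · apply hball₁
      rw [Metric.mem_ball, Real.dist_eq, abs_of_nonpos (by linarith)]
      linarith [hx.1]
    · rcases le_or_gt x b with h' | h'
      · exact hTcov ⟨h, h'⟩
      · apply hball₂
        rw [Metric.mem_ball, Real.dist_eq, abs_of_pos (by linarith)]
        linarith [hx.2]
  have hIccIoo : Set.Icc a b ⊆ Set.Ioo (a - δ) (b + δ) :=
    fun x hx => ⟨by linarith [hx.1], by linarith [hx.2]⟩
  -- smooth partition of unity subordinate to the cover
  obtain ⟨f, hfsub⟩ := SmoothPartitionOfUnity.exists_isSubordinate (ι := ↥T)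
    (I := 𝓘(ℝ, ℝ)) (M := ℝ) (isClosed_Icc (a := a - δ) (b := b + δ))
    (fun i => U i.1) (fun i => isOpen_Ioo)
    (by
      intro x hx
      rcases Set.mem_iUnion₂.mp (hthick hx) with ⟨t, ht, hxU⟩
      exact Set.mem_iUnion.mpr ⟨⟨t, ht⟩, hxU⟩)
  have hfC : ∀ i : ↥T, ContDiff ℝ k (f i) := by
    intro i
    have := contMDiff_iff_contDiff.mp (f i).contMDiff
    exact this.of_le (by exact_mod_cast le_top)
  refine ⟨G, hGsmooth, ?_⟩
  intro α hα
  set A : ↥T → (ℝ → (V →L[ℝ] ℝ)) := fun i => fun s => f i s • α s with hAdef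
  have hAsm : ∀ i, MemCk0 k a b (A i) := by
    intro i
    refine ⟨(hfC i).smul hα.1, fun j hj => ?_⟩
    constructor
    · exact smul_iteratedDeriv_eq_zero k (f i) α a (hfC i) hα.1
        (fun j' hj' => (hα.2 j' hj').1) j hj
    · exact smul_iteratedDeriv_eq_zero k (f i) α b (hfC i) hα.1
        (fun j' hj' => (hα.2 j' hj').2) j hj
  have hsumA : MemCk0 k a b (∑ i, A i) :=
    MemCk0.sum Finset.univ A fun i _ => hAsm i
  have hβ : MemCk0 k a b (α - ∑ i, A i) := hα.sub hsumA
  -- the remainder vanishes near [a,b]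
  have hβev : ∀ x ∈ Set.Icc a b, (α - ∑ i, A i) =ᶠ[nhds x] (fun _ => (0 : V →L[ℝ] ℝ)) := by
    intro x hx
    filter_upwards [isOpen_Ioo.eventually_mem (hIccIoo hx)] with y hy
    have hy' : y ∈ Set.Icc (a - δ) (b + δ) := Set.Ioo_subset_Icc_self hy
    have hsum1 : ∑ i, f i y = 1 := by
      have := f.sum_eq_one hy'
      rwa [finsum_eq_sum_of_fintype] at this
    have : (∑ i, A i) y = ∑ i, f i y • α y := by
      rw [Finset.sum_apply]
    simp only [Pi.sub_apply, this, ← Finset.sum_smul, hsum1, one_smul, sub_self]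
  have hβzero : lam (α - ∑ i, A i) = 0 := by
    apply hlam.eq_zero hβ
    intro j _ t ht
    exact iteratedDeriv_eq_zero_of_eventuallyEq (hβev t ht) j
  have hsplit : lam α = ∑ i, lam (A i) := by
    have hcancel : (α - ∑ i, A i) + ∑ i, A i = α := by
      abel
    have := hlam.map_add _ _ hβ hsumA
    rw [hcancel] at this
    rw [this, hβzero, zero_add]
    exact hlam.sum_eq Finset.univ A fun i _ => hAsm i
  have hAi : ∀ i : ↥T, lam (A i) = ∫ s in a..b, (A i s) (G s) := by
    intro i
    have hti : (i : ℝ) ∈ Set.Icc a b := hTsub i.2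
    have hψ0 : ∀ s, s ∉ U i.1 → f i s = 0 := by
      intro s hs
      exact image_eq_zero_of_notMem_tsupport fun hc => hs (hfsub i hc)
    have hsupp : ∀ s, s ∉ Set.Icc ((i : ℝ) - ε i) ((i : ℝ) + ε i) → A i s = 0 := by
      intro s hs
      have : s ∉ U i.1 := fun hc => hs (hUsub _ hc)
      rw [hAdef]
      simp only [hψ0 s this, zero_smul]
    rw [hrep (i : ℝ) hti (A i) (hAsm i) hsupp]
    apply intervalIntegral.integral_congr
    intro s hs
    rw [Set.uIcc_of_le hab.le] at hs
    by_cases hsU : s ∈ U i.1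
    · simp only [hGeq i.1 i.2 s hsU hs]
    · rw [hAdef]
      simp only [hψ0 s hsU, zero_smul, ContinuousLinearMap.zero_apply]
  rw [hsplit]
  have hint : ∀ i : ↥T, IntervalIntegrable (fun s => (A i s) (G s)) volume a b := by
    intro i
    apply ContinuousOn.intervalIntegrable
    rw [Set.uIcc_of_le hab.le]
    have hAc : Continuous (A i) := ((hfC i).continuous).smul hα.1.continuous
    exact hAc.continuousOn.clm_apply hGsmooth.continuousOn
  calc ∑ i, lam (A i) = ∑ i, ∫ s in a..b, (A i s) (G s) := by
        exact Finset.sum_congr rfl fun i _ => hAi i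
    _ = ∫ s in a..b, ∑ i, (A i s) (G s) := by
        rw [intervalIntegral.integral_finset_sum fun i _ => hint i]
    _ = ∫ s in a..b, α s (G s) := by
        apply intervalIntegral.integral_congr
        intro s hs
        rw [Set.uIcc_of_le hab.le] at hs
        have hsum1 : ∑ i, f i s = 1 := by
          have := f.sum_eq_one (Set.Ioo_subset_Icc_self (hIccIoo hs))
          rwa [finsum_eq_sum_of_fintype] at this
        simp only [hAdef, ContinuousLinearMap.smul_apply]
        rw [← Finset.sum_smul, hsum1, one_smul]
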